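/- Let A be a real d × d matrix and C a real q × d matrix. The following are equivalent: (1) the dq × d matrix O(A,C) obtained by stacking the matrices C, CA, CA², …, CA^{d−1} has full rank d; (2) there exist k ∈ ℕ, times t₁, …, t_k ≥ 0, and a linear map f : (ℝ^q)^k → ℝ^d such that f(∫₀^{t₁} C e^{sA} x ds, …, ∫₀^{t_k} C e^{sA} x ds) = x for all x ∈ ℝ^d. -/

import Mathlib

open MeasureTheory Matrix NormedSpace

namespace Stmt7Aux

variable {d q : ℕ} (A : Matrix (Fin d) (Fin d) ℝ) (C : Matrix (Fin q) (Fin d) ℝ)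

/-- The linear map `M ↦ (C * M) *ᵥ v` on matrices. -/
noncomputable def psi (v : Fin d → ℝ) : Matrix (Fin d) (Fin d) ℝ →ₗ[ℝ] (Fin q → ℝ) where
  toFun M := (C * M).mulVec v
  map_add' M N := by simp [Matrix.mul_add, Matrix.add_mulVec]
  map_smul' r M := by simp [Matrix.mul_smul, Matrix.smul_mulVec]

lemma cont_exp_apply (v : Fin d → ℝ) :
    Continuous fun s : ℝ => (C * exp (s • A)).mulVec v := by
  letI : SeminormedRing (Matrix (Fin d) (Fin d) ℝ) := Matrix.linftyOpSemiNormedRing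
  letI : NormedRing (Matrix (Fin d) (Fin d) ℝ) := Matrix.linftyOpNormedRing
  letI : NormedAlgebra ℝ (Matrix (Fin d) (Fin d) ℝ) := Matrix.linftyOpNormedAlgebra
  exact ((psi C v).toContinuousLinearMap.continuous).comp
    ((by have h := continuousOn_exp (𝕂 := ℝ) (𝔸 := Matrix (Fin d) (Fin d) ℝ); rw [expSeries_radius_eq_top, Metric.eball_top_eq_univ, continuousOn_univ] at h; exact h : Continuous (exp : Matrix (Fin d) (Fin d) ℝ → Matrix (Fin d) (Fin d) ℝ)).comp (continuous_id.smul continuous_const))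

lemma integrand_zero (v : Fin d → ℝ) (h : ∀ n : ℕ, (C * A ^ n).mulVec v = 0) (s : ℝ) :
    (C * exp (s • A)).mulVec v = 0 := by
  letI : SeminormedRing (Matrix (Fin d) (Fin d) ℝ) := Matrix.linftyOpSemiNormedRing
  letI : NormedRing (Matrix (Fin d) (Fin d) ℝ) := Matrix.linftyOpNormedRing
  letI : NormedAlgebra ℝ (Matrix (Fin d) (Fin d) ℝ) := Matrix.linftyOpNormedAlgebra
  have hsum : Summable fun n : ℕ => ((n.factorial : ℝ)⁻¹) • (s • A) ^ n :=
    expSeries_summable' (𝕂 := ℝ) (s • A)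
  have hmap := ((psi C v).toContinuousLinearMap).map_tsum hsum
  have hexp : exp (s • A) = ∑' n : ℕ, ((n.factorial : ℝ)⁻¹) • (s • A) ^ n := by
    rw [exp_eq_tsum (𝕂 := ℝ)]
  have : (C * exp (s • A)).mulVec v
      = ∑' n : ℕ, ((psi C v).toContinuousLinearMap) (((n.factorial : ℝ)⁻¹) • (s • A) ^ n) := by
    rw [hexp]; exact hmap
  rw [this]
  have hterm : ∀ n : ℕ, ((psi C v).toContinuousLinearMap) (((n.factorial : ℝ)⁻¹) • (s • A) ^ n) = 0 := by
    intro n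
    have : ((psi C v).toContinuousLinearMap) (((n.factorial : ℝ)⁻¹) • (s • A) ^ n)
        = ((n.factorial : ℝ)⁻¹) • (s ^ n) • ((C * A ^ n).mulVec v) := by
      rw [_root_.map_smul, smul_pow]
      simp [psi, Matrix.mul_smul, Matrix.smul_mulVec]
    rw [this, h n]
    simp
  simp [hterm]

lemma hasDerivAt_g (v : Fin d → ℝ) (s : ℝ) :
    HasDerivAt (fun u : ℝ => (C * exp (u • A)).mulVec v)
      ((C * exp (s • A)).mulVec (A.mulVec v)) s := by
  letI : SeminormedRing (Matrix (Fin d) (Fin d) ℝ) := Matrix.linftyOpSemiNormedRing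
  letI : NormedRing (Matrix (Fin d) (Fin d) ℝ) := Matrix.linftyOpNormedRing
  letI : NormedAlgebra ℝ (Matrix (Fin d) (Fin d) ℝ) := Matrix.linftyOpNormedAlgebra
  have h1 := hasDerivAt_exp_smul_const (𝕂 := ℝ) A s
  have h2 := ((psi C v).toContinuousLinearMap.hasFDerivAt).comp_hasDerivAt s h1
  have hval : ((psi C v).toContinuousLinearMap) (exp (s • A) * A)
      = (C * exp (s • A)).mulVec (A.mulVec v) := by
    show (C * (exp (s • A) * A)).mulVec v = _
    rw [Matrix.mulVec_mulVec, Matrix.mul_assoc]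
  exact h2.congr_deriv hval

lemma deriv_zero {F G : ℝ → (Fin q → ℝ)} (hG : Continuous G)
    (hd : ∀ t : ℝ, HasDerivAt F (G t) t) (hF : ∀ t, 0 ≤ t → F t = 0) :
    ∀ t, 0 ≤ t → G t = 0 := by
  have hpos : ∀ t : ℝ, 0 < t → G t = 0 := by
    intro t ht
    have hev : F =ᶠ[nhds t] (fun _ => 0) := by
      filter_upwards [Ioi_mem_nhds ht] with s hs using hF s (le_of_lt hs)
    have h0 : HasDerivAt F 0 t :=
      (hasDerivAt_const t (0 : Fin q → ℝ)).congr_of_eventuallyEq hev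
    exact (hd t).unique h0
  intro t ht
  rcases eq_or_lt_of_le ht with rfl | ht'
  · have h1 : Filter.Tendsto G (nhdsWithin 0 (Set.Ioi 0)) (nhds (G 0)) :=
      (hG.continuousAt).continuousWithinAt
    have h2 : Filter.Tendsto G (nhdsWithin (0:ℝ) (Set.Ioi 0)) (nhds 0) := by
      refine Filter.Tendsto.congr' ?_ tendsto_const_nhds
      filter_upwards [self_mem_nhdsWithin] with s hs using (hpos s hs).symm
    exact tendsto_nhds_unique h1 h2
  · exact hpos t ht'

lemma exp_zero_pt : exp ((0:ℝ) • A) = 1 := by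
  rw [zero_smul]; exact exp_zero

lemma pow_zero_of_integral_zero (x : Fin d → ℝ)
    (h : ∀ t : ℝ, 0 ≤ t → (∫ s in (0:ℝ)..t, (C * exp (s • A)).mulVec x) = 0) :
    ∀ n : ℕ, (C * A ^ n).mulVec x = 0 := by
  have key : ∀ n : ℕ, ∀ t : ℝ, 0 ≤ t →
      (C * exp (t • A)).mulVec ((A ^ n).mulVec x) = 0 := by
    intro n
    induction n with
    | zero =>
      have hF : ∀ t : ℝ, HasDerivAt (fun u : ℝ => ∫ s in (0:ℝ)..u, (C * exp (s • A)).mulVec x)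
          ((C * exp (t • A)).mulVec x) t := by
        intro t
        exact intervalIntegral.integral_hasDerivAt_right
          ((cont_exp_apply A C x).intervalIntegrable _ _)
          ((cont_exp_apply A C x).stronglyMeasurableAtFilter _ _)
          (cont_exp_apply A C x).continuousAt
      have := deriv_zero (cont_exp_apply A C x) hF h
      intro t ht
      simpa using this t ht
    | succ n ih =>
      have hd' : ∀ t : ℝ, HasDerivAt (fun u : ℝ => (C * exp (u • A)).mulVec ((A ^ n).mulVec x))
          ((C * exp (t • A)).mulVec ((A ^ (n+1)).mulVec x)) t := by
        intro t
        have := hasDerivAt_g A C ((A ^ n).mulVec x) t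
        convert this using 2
        rw [Matrix.mulVec_mulVec, ← pow_succ']
      exact deriv_zero (cont_exp_apply A C _) hd' ih
  intro n
  have := key n 0 le_rfl
  rw [exp_zero_pt] at this
  simpa [Matrix.mulVec_mulVec] using this

lemma ext_pow (v : Fin d → ℝ) (h : ∀ i : Fin d, (C * A ^ (i : ℕ)).mulVec v = 0) :
    ∀ n : ℕ, (C * A ^ n).mulVec v = 0 := by
  rcases Nat.eq_zero_or_pos d with hd | hd
  · subst hd
    intro n
    ext j
    simp [Matrix.mulVec, dotProduct]
  · intro n
    induction n using Nat.strong_induction_on with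
    | _ n ih =>
      rcases lt_or_ge n d with hn | hn
      · exact h ⟨n, hn⟩
      · have hdeg : A.charpoly.natDegree = d := by
          simpa using A.charpoly_natDegree_eq_dim
        have hcoeff : A.charpoly.coeff d = 1 := by
          have := A.charpoly_monic
          rw [Polynomial.Monic, Polynomial.leadingCoeff, hdeg] at this
          exact this
        have hch := A.aeval_self_charpoly
        rw [Polynomial.aeval_eq_sum_range, hdeg, Finset.sum_range_succ, hcoeff, one_smul] at hch
        have hAd : A ^ d = -(∑ i ∈ Finset.range d, A.charpoly.coeff i • A ^ i) := by
          exact eq_neg_of_add_eq_zero_right hch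
        have hAn : A ^ n = -(∑ i ∈ Finset.range d, A.charpoly.coeff i • A ^ (n - d + i)) := by
          have h1 : A ^ n = A ^ (n - d) * A ^ d := by
            rw [← pow_add]; congr 1; omega
          rw [h1, hAd, mul_neg, Finset.mul_sum]
          congr 1
          refine Finset.sum_congr rfl fun i _ => ?_
          rw [mul_smul_comm, ← pow_add]
        have hlin : (C * A ^ n).mulVec v
            = -(∑ i ∈ Finset.range d, A.charpoly.coeff i • (C * A ^ (n - d + i)).mulVec v) := by
          have e1 : (C * A ^ n).mulVec v = (psi C v) (A ^ n) := rfl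
          rw [e1, hAn, map_neg, map_sum]
          congr 1
          refine Finset.sum_congr rfl fun i _ => ?_
          rw [_root_.map_smul]
          rfl
        rw [hlin]
        have : ∀ i ∈ Finset.range d, A.charpoly.coeff i • (C * A ^ (n - d + i)).mulVec v = 0 := by
          intro i hi
          rw [ih (n - d + i) (by simp at hi; omega)]
          simp
        rw [Finset.sum_congr rfl this]
        simp

lemma exists_fin_inf {K : ℝ → Submodule ℝ (Fin d → ℝ)}
    (h : ∀ x : Fin d → ℝ, (∀ t, 0 ≤ t → x ∈ K t) → x = 0) :
    ∃ (k : ℕ) (t : Fin k → ℝ), (∀ i, 0 ≤ t i) ∧ (⨅ i, K (t i)) = ⊥ := by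
  suffices h' : ∀ n (k : ℕ) (t : Fin k → ℝ), (∀ i, 0 ≤ t i) →
      Module.finrank ℝ (↥(⨅ i, K (t i))) ≤ n →
      ∃ (k' : ℕ) (t' : Fin k' → ℝ), (∀ i, 0 ≤ t' i) ∧ (⨅ i, K (t' i)) = ⊥ by
    refine h' d 0 (fun i => 0) (fun i => le_rfl) ?_
    have : (⨅ i : Fin 0, K 0) = ⊤ := by simp
    rw [this]
    simp only [finrank_top]
    simp [Module.finrank_pi]
  intro n
  induction n with
  | zero =>
    intro k t ht h0
    refine ⟨k, t, ht, ?_⟩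
    exact Submodule.finrank_eq_zero.mp (Nat.le_zero.mp h0)
  | succ n ih =>
    intro k t ht hle
    by_cases hbot : (⨅ i, K (t i)) = ⊥
    · exact ⟨k, t, ht, hbot⟩
    · obtain ⟨x, hxmem, hx0⟩ := Submodule.exists_mem_ne_zero_of_ne_bot hbot
      by_cases hall : ∀ s, 0 ≤ s → x ∈ K s
      · exact absurd (h x hall) hx0
      · push_neg at hall
        obtain ⟨s, hs0, hxs⟩ := hall
        have hinf : (⨅ i : Fin (k+1), K ((Fin.cons s t : Fin (k+1) → ℝ) i)) = K s ⊓ ⨅ i, K (t i) := by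
          apply le_antisymm
          · refine le_inf (iInf_le_of_le 0 (le_of_eq (by simp))) ?_
            exact le_iInf fun i => iInf_le_of_le i.succ (le_of_eq (by simp))
          · refine le_iInf fun i => ?_
            refine Fin.cases ?_ (fun j => ?_) i
            · exact inf_le_left.trans (le_of_eq (by simp))
            · exact inf_le_right.trans ((iInf_le _ j).trans (le_of_eq (by simp)))
        have hlt : K s ⊓ (⨅ i, K (t i)) < ⨅ i, K (t i) := by
          refine lt_of_le_of_ne inf_le_right fun heq => hxs ?_
          have : x ∈ K s ⊓ ⨅ i, K (t i) := heq.symm ▸ hxmem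
          exact this.1
        have hfr := Submodule.finrank_lt_finrank_of_lt hlt
        refine ih (k+1) (Fin.cons s t) (fun i => Fin.cases hs0 ht i) ?_
        rw [hinf]
        omega

/-- The linear map `x ↦ ∫₀ᵗ (C e^{sA}) x ds`. -/
noncomputable def Lmap (t : ℝ) : (Fin d → ℝ) →ₗ[ℝ] (Fin q → ℝ) where
  toFun x := ∫ s in (0:ℝ)..t, (C * exp (s • A)).mulVec x
  map_add' x y := by
    rw [← intervalIntegral.integral_add ((cont_exp_apply A C x).intervalIntegrable _ _)
      ((cont_exp_apply A C y).intervalIntegrable _ _)]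
    simp [Matrix.mulVec_add]
  map_smul' r x := by
    rw [RingHom.id_apply, ← intervalIntegral.integral_smul]
    simp [Matrix.mulVec_smul]

end Stmt7Aux

open Stmt7Aux

/-- **Lemma 3.6.** For a `d × d` matrix `A` and a `q × d` matrix `C`, the
observability matrix `O(A,C)` (block rows `C, CA, …, CA^{d-1}`) has full rank `d` if and
only if there are finitely many times `t₁, …, t_k ≥ 0` and a linear map
`f : (ℝ^q)^k → ℝ^d` with `f (∫₀^{t₁} C e^{sA} x ds, …, ∫₀^{t_k} C e^{sA} x ds) = x`
for all `x ∈ ℝ^d`. -/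
theorem stmt7 (d q : ℕ)
    (A : Matrix (Fin d) (Fin d) ℝ) (C : Matrix (Fin q) (Fin d) ℝ)
    (O : Matrix (Fin d × Fin q) (Fin d) ℝ)
    (hO : ∀ (i : Fin d) (j : Fin q) (l : Fin d), O (i, j) l = (C * A ^ (i : ℕ)) j l) :
    O.rank = d ↔
      ∃ (k : ℕ) (t : Fin k → ℝ) (f : (Fin k → Fin q → ℝ) →ₗ[ℝ] (Fin d → ℝ)),
        (∀ i, 0 ≤ t i) ∧
        ∀ x : Fin d → ℝ,
          f (fun i => ∫ s in (0:ℝ)..(t i),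
              (C * NormedSpace.exp (s • A)).mulVec x) = x := by
  classical
  have hker : ∀ x : Fin d → ℝ, O.mulVec x = 0 ↔ ∀ i : Fin d, (C * A ^ (i : ℕ)).mulVec x = 0 := by
    intro x
    constructor
    · intro hx i
      funext j
      have := congrFun hx (i, j)
      simpa [Matrix.mulVec, dotProduct, hO] using this
    · intro hx
      funext p
      obtain ⟨i, j⟩ := p
      have := congrFun (hx i) j
      simpa [Matrix.mulVec, dotProduct, hO] using this
  have hrank : O.rank = d ↔
      ∀ x : Fin d → ℝ, (∀ i : Fin d, (C * A ^ (i : ℕ)).mulVec x = 0) → x = 0 := by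
    have hsum := LinearMap.finrank_range_add_finrank_ker O.mulVecLin
    have hdim : Module.finrank ℝ (Fin d → ℝ) = d := by simp [Module.finrank_pi]
    rw [hdim] at hsum
    have hrk : O.rank = Module.finrank ℝ (↥(LinearMap.range O.mulVecLin)) := rfl
    constructor
    · intro hr x hx
      have hk0 : Module.finrank ℝ (↥(LinearMap.ker O.mulVecLin)) = 0 := by omega
      have hbot := Submodule.finrank_eq_zero.mp hk0
      have hmem : x ∈ LinearMap.ker O.mulVecLin := by
        rw [LinearMap.mem_ker, Matrix.mulVecLin_apply]
        exact (hker x).mpr hx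
      rw [hbot] at hmem
      simpa using hmem
    · intro hx
      have hbot : LinearMap.ker O.mulVecLin = ⊥ := by
        rw [LinearMap.ker_eq_bot']
        intro x hxm
        exact hx x ((hker x).mp (by simpa [Matrix.mulVecLin_apply] using hxm))
      have h0 : Module.finrank ℝ (↥(LinearMap.ker O.mulVecLin)) = 0 := by rw [hbot]; simp
      omega
  rw [hrank]
  constructor
  · intro hinj
    obtain ⟨k, t, ht, hbot⟩ :=
      exists_fin_inf (K := fun t => LinearMap.ker (Lmap A C t)) (by
        intro x hx
        refine hinj x fun i => ?_
        refine pow_zero_of_integral_zero A C x (fun t' ht' => ?_) (i : ℕ)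
        have := hx t' ht'
        rw [LinearMap.mem_ker] at this
        exact this)
    set Λ : (Fin d → ℝ) →ₗ[ℝ] (Fin k → Fin q → ℝ) := LinearMap.pi (fun i => Lmap A C (t i)) with hΛ
    have hkerΛ : LinearMap.ker Λ = ⊥ := by
      rw [hΛ, LinearMap.ker_pi]
      exact hbot
    obtain ⟨f, hf⟩ := Λ.exists_leftInverse_of_injective hkerΛ
    refine ⟨k, t, f, ht, fun x => ?_⟩
    exact LinearMap.congr_fun hf x
  · rintro ⟨k, t, f, ht, hf⟩ x hx
    have hall : ∀ n : ℕ, (C * A ^ n).mulVec x = 0 := ext_pow A C x hx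
    have hzero : ∀ s : ℝ, (C * exp (s • A)).mulVec x = 0 := integrand_zero A C x hall
    have h0 : (fun i : Fin k => ∫ s in (0:ℝ)..(t i), (C * exp (s • A)).mulVec x)
        = (0 : Fin k → Fin q → ℝ) := by
      funext i
      simp only [hzero]
      simp
    have hfx := hf x
    rw [h0] at hfx
    rw [← hfx]
    simp
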